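/- The upshifted likelihood-ratio order is preserved under convolution: if m¹ ≤_{lr↑} m² and n¹ ≤_{lr↑} n² are finitely supported probability distributions on ℕ, then m¹ ∗ n¹ ≤_{lr↑} m² ∗ n², where ∗ denotes convolution of distributions on ℕ. -/

import Mathlib

/-- `p` is a finitely supported probability distribution on ℕ. -/
def IsDist (p : ℕ → ℝ) : Prop :=
  (∀ x, 0 ≤ p x) ∧ (Function.support p).Finite ∧ ∑' x, p x = 1

/-- Upshifted likelihood-ratio order. -/
def LRup (p q : ℕ → ℝ) : Prop :=
  ∀ i k l : ℕ, p (i + k + l) * q i ≤ p (i + l) * q (i + k)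

/-- Convolution of distributions on ℕ. -/
def conv (p q : ℕ → ℝ) (x : ℕ) : ℝ :=
  ∑ y ∈ Finset.range (x + 1), p y * q (x - y)

noncomputable def zext (f : ℕ → ℝ) : ℤ → ℝ := fun z => if 0 ≤ z then f z.toNat else 0

lemma zext_coe (f : ℕ → ℝ) (n : ℕ) : zext f (n : ℤ) = f n := by simp [zext]

lemma zext_neg (f : ℕ → ℝ) {z : ℤ} (h : z < 0) : zext f z = 0 := by
  simp [zext, not_le.2 h]

lemma zext_nonneg (f : ℕ → ℝ) (hf : ∀ x, 0 ≤ f x) (z : ℤ) : 0 ≤ zext f z := by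
  unfold zext; split
  · exact hf _
  · exact le_refl 0

/-- key shift inequality on ℤ from LRup -/
lemma Hshift (p q : ℕ → ℝ) (hp : ∀ x, 0 ≤ p x) (hq : ∀ x, 0 ≤ q x) (hpq : LRup p q)
    (x y t : ℤ) (ht : 0 ≤ t) (hxy : y - t ≤ x) :
    zext p (x + t) * zext q (y - t) ≤ zext p x * zext q y := by
  by_cases hc : 0 ≤ y - t
  · have hy : 0 ≤ y := by omega
    have hx : 0 ≤ x := le_trans hc hxy
    obtain ⟨i, hi⟩ : ∃ i : ℕ, (i : ℤ) = y - t := ⟨(y - t).toNat, Int.toNat_of_nonneg hc⟩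
    obtain ⟨k, hk⟩ : ∃ k : ℕ, (k : ℤ) = t := ⟨t.toNat, Int.toNat_of_nonneg ht⟩
    obtain ⟨l, hl⟩ : ∃ l : ℕ, (l : ℤ) = x - y + t := ⟨(x - y + t).toNat, Int.toNat_of_nonneg (by omega)⟩
    have e1 : x + t = ((i + k + l : ℕ) : ℤ) := by push_cast; omega
    have e2 : y - t = ((i : ℕ) : ℤ) := by omega
    have e3 : x = ((i + l : ℕ) : ℤ) := by push_cast; omega
    have e4 : y = ((i + k : ℕ) : ℤ) := by push_cast; omega
    rw [e1, e2, e3, e4, zext_coe, zext_coe, zext_coe, zext_coe]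
    exact hpq i k l
  · rw [zext_neg q (by omega), mul_zero]
    exact mul_nonneg (zext_nonneg p hp x) (zext_nonneg q hq y)
section NminLemmas

variable (q₁ q₂ : ℕ → ℝ)

noncomputable def Nmin (α β : ℤ) : ℝ :=
  min (zext q₁ α * zext q₂ β) (zext q₁ β * zext q₂ α)

variable {q₁ q₂}
variable (hq₁ : ∀ x, 0 ≤ q₁ x) (hq₂ : ∀ x, 0 ≤ q₂ x) (hq : LRup q₁ q₂)

lemma Nmin_symm (α β : ℤ) : Nmin q₁ q₂ α β = Nmin q₁ q₂ β α := min_comm _ _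

include hq₁ hq₂ in
lemma Nmin_nonneg (α β : ℤ) : 0 ≤ Nmin q₁ q₂ α β :=
  le_min (mul_nonneg (zext_nonneg _ hq₁ _) (zext_nonneg _ hq₂ _))
    (mul_nonneg (zext_nonneg _ hq₁ _) (zext_nonneg _ hq₂ _))

include hq₁ hq₂ hq in
lemma Nmin_mono {x y t : ℤ} (ht : 0 ≤ t) (hxy : y - t ≤ x) :
    Nmin q₁ q₂ (x + t) (y - t) ≤ Nmin q₁ q₂ x y := by
  apply le_min
  · exact le_trans (min_le_left _ _) (Hshift q₁ q₂ hq₁ hq₂ hq x y t ht hxy)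
  · refine le_trans (min_le_left _ _) ?_
    have h := Hshift q₁ q₂ hq₁ hq₂ hq y x (x + t - y) (by omega) (by omega)
    have e1 : y + (x + t - y) = x + t := by ring
    have e2 : x - (x + t - y) = y - t := by ring
    rw [e1, e2] at h
    exact h

include hq₁ hq₂ in
lemma Nmin_zero₁ {α : ℤ} (h : α < 0) (β : ℤ) : Nmin q₁ q₂ α β = 0 := by
  have h1 : zext q₁ α = 0 := zext_neg _ h
  have h2 : zext q₂ α = 0 := zext_neg _ h
  refine le_antisymm ?_ (Nmin_nonneg hq₁ hq₂ _ _)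
  exact le_trans (min_le_left _ _) (by rw [h1, zero_mul])

include hq₁ hq₂ in
lemma Nmin_zero₂ {β : ℤ} (h : β < 0) (α : ℤ) : Nmin q₁ q₂ α β = 0 := by
  rw [Nmin_symm]; exact Nmin_zero₁ hq₁ hq₂ h α

lemma Ntwo_nonneg (α β : ℤ) : 0 ≤ zext q₁ α * zext q₂ β - Nmin q₁ q₂ α β :=
  sub_nonneg.2 (min_le_left _ _)

include hq₁ hq₂ hq in
lemma Ntwo_zero_of_le {α β : ℤ} (h : β ≤ α) :
    zext q₁ α * zext q₂ β - Nmin q₁ q₂ α β = 0 := by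
  have h1 : zext q₁ α * zext q₂ β ≤ zext q₁ β * zext q₂ α := by
    have h2 := Hshift q₁ q₂ hq₁ hq₂ hq β α (α - β) (by omega) (by omega)
    have e1 : β + (α - β) = α := by ring
    have e2 : α - (α - β) = β := by ring
    rw [e1, e2] at h2; exact h2
  rw [Nmin, min_eq_left h1, sub_self]

include hq₁ hq₂ in
lemma Ntwo_zero₁ {α : ℤ} (h : α < 0) (β : ℤ) :
    zext q₁ α * zext q₂ β - Nmin q₁ q₂ α β = 0 := by
  rw [Nmin_zero₁ hq₁ hq₂ h, zext_neg _ h, zero_mul, sub_zero]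

include hq₁ hq₂ in
lemma Ntwo_zero₂ {β : ℤ} (h : β < 0) (α : ℤ) :
    zext q₁ α * zext q₂ β - Nmin q₁ q₂ α β = 0 := by
  rw [Nmin_zero₂ hq₁ hq₂ h, zext_neg _ h, mul_zero, zero_sub, neg_eq_zero]

end NminLemmas
section Sums
open Finset

lemma sum_shift (f : ℤ → ℝ) (l r d : ℤ) :
    ∑ u ∈ Finset.Icc l r, f (u + d) = ∑ u ∈ Finset.Icc (l + d) (r + d), f u := by
  rw [← Finset.map_add_right_Icc, Finset.sum_map]
  rfl

/-- change box of an iterated sum to the canonical support box -/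
lemma double_core (F : ℤ → ℤ → ℝ) (A₁ B₁ A₂ B₂ : ℤ)
    (hsupp : ∀ u v, F u v ≠ 0 → A₁ ≤ u ∧ u ≤ B₁ ∧ A₂ ≤ v ∧ v ≤ B₂)
    (l₁ r₁ l₂ r₂ : ℤ) (h₁ : l₁ ≤ A₁) (h₂ : B₁ ≤ r₁) (h₃ : l₂ ≤ A₂) (h₄ : B₂ ≤ r₂) :
    ∑ u ∈ Finset.Icc l₁ r₁, ∑ v ∈ Finset.Icc l₂ r₂, F u v
      = ∑ u ∈ Finset.Icc A₁ B₁, ∑ v ∈ Finset.Icc A₂ B₂, F u v := by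
  have step1 : ∀ u : ℤ, ∑ v ∈ Finset.Icc l₂ r₂, F u v = ∑ v ∈ Finset.Icc A₂ B₂, F u v := by
    intro u
    refine (Finset.sum_subset ?_ ?_).symm
    · intro v hv
      simp only [Finset.mem_Icc] at hv ⊢
      omega
    · intro v _ hv
      simp only [Finset.mem_Icc] at hv
      by_contra hne
      rcases hsupp u v hne with ⟨_, _, hv1, hv2⟩
      omega
  simp_rw [step1]
  refine (Finset.sum_subset ?_ ?_).symm
  · intro u hu
    simp only [Finset.mem_Icc] at hu ⊢
    omega
  · intro u _ hu
    simp only [Finset.mem_Icc] at hu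
    apply Finset.sum_eq_zero
    intro v _
    by_contra hne
    rcases hsupp u v hne with ⟨hu1, hu2, _, _⟩
    omega

lemma conv_as_zsum (p q : ℕ → ℝ) (x : ℕ) (R : ℤ) (hR : (x : ℤ) ≤ R) :
    conv p q x = ∑ u ∈ Finset.Icc (-R) R, zext p u * zext q ((x : ℤ) - u) := by
  have h1 : conv p q x = ∑ u ∈ Finset.Icc (0 : ℤ) (x : ℤ), zext p u * zext q ((x : ℤ) - u) := by
    rw [conv]
    refine Finset.sum_nbij' (fun (n : ℕ) => (n : ℤ)) (fun (z : ℤ) => z.toNat) ?_ ?_ ?_ ?_ ?_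
    · intro n hn
      simp only [Finset.mem_range] at hn
      simp only [Finset.mem_Icc]
      omega
    · intro z hz
      simp only [Finset.mem_Icc] at hz
      simp only [Finset.mem_range]
      omega
    · intro n _; simp
    · intro z hz
      simp only [Finset.mem_Icc] at hz
      simp [Int.toNat_of_nonneg hz.1]
    · intro n hn
      simp only [Finset.mem_range] at hn
      have e1 : ((x : ℤ) - (n : ℤ)) = ((x - n : ℕ) : ℤ) := by
        push_cast [Nat.cast_sub (by omega : n ≤ x)]; ring
      rw [zext_coe, e1, zext_coe]
  rw [h1]
  refine Finset.sum_subset ?_ ?_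
  · intro u hu
    simp only [Finset.mem_Icc] at hu ⊢
    omega
  · intro u _ hu
    simp only [Finset.mem_Icc] at hu
    rcases (by omega : u < 0 ∨ (x:ℤ) - u < 0) with h | h
    · rw [zext_neg _ h, zero_mul]
    · rw [zext_neg _ h, mul_zero]

lemma conv_mul (p q p' q' : ℕ → ℝ) (x y : ℕ) (R : ℤ) (hx : (x : ℤ) ≤ R) (hy : (y : ℤ) ≤ R) :
    conv p q x * conv p' q' y
      = ∑ u ∈ Finset.Icc (-R) R, ∑ v ∈ Finset.Icc (-R) R,
          (zext p u * zext p' v) * (zext q ((x : ℤ) - u) * zext q' ((y : ℤ) - v)) := by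
  rw [conv_as_zsum p q x R hx, conv_as_zsum p' q' y R hy, Finset.sum_mul_sum]
  apply Finset.sum_congr rfl
  intro u _
  apply Finset.sum_congr rfl
  intro v _
  ring

end Sums
section Main
open Finset

variable (m₁ m₂ n₁ n₂ : ℕ → ℝ)

noncomputable def Mk (p q : ℕ → ℝ) (u v : ℤ) : ℝ := zext p u * zext q v

variable {m₁ m₂ n₁ n₂}
variable (hm₁ : ∀ x, 0 ≤ m₁ x) (hm₂ : ∀ x, 0 ≤ m₂ x) (hn₁ : ∀ x, 0 ≤ n₁ x) (hn₂ : ∀ x, 0 ≤ n₂ x)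
variable (hm : LRup m₁ m₂) (hn : LRup n₁ n₂)

include hm₁ hm₂ hm in
lemma Mshift {x y t : ℤ} (ht : 0 ≤ t) (hxy : y - t ≤ x) :
    Mk m₁ m₂ (x + t) (y - t) ≤ Mk m₁ m₂ x y :=
  Hshift m₁ m₂ hm₁ hm₂ hm x y t ht hxy

include hm₁ hm₂ in
lemma Mk_nonneg (u v : ℤ) : 0 ≤ Mk m₁ m₂ u v :=
  mul_nonneg (zext_nonneg _ hm₁ _) (zext_nonneg _ hm₂ _)

lemma Mk_zero₁ {u : ℤ} (h : u < 0) (v : ℤ) : Mk m₁ m₂ u v = 0 := by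
  rw [Mk, zext_neg _ h, zero_mul]

lemma Mk_zero₂ {v : ℤ} (h : v < 0) (u : ℤ) : Mk m₁ m₂ u v = 0 := by
  rw [Mk, zext_neg _ h, mul_zero]

/-- N₂ = Mk n₁ n₂ - Nmin -/
noncomputable def Ntwo (q₁ q₂ : ℕ → ℝ) (α β : ℤ) : ℝ :=
  Mk q₁ q₂ α β - Nmin q₁ q₂ α β

omit hm₁ hm₂ hm hn in
lemma Ntwo_nonneg' (α β : ℤ) : 0 ≤ Ntwo n₁ n₂ α β :=
  sub_nonneg.2 (min_le_left _ _)

include hn₁ hn₂ hn in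
lemma Ntwo_zero_le {α β : ℤ} (h : β ≤ α) : Ntwo n₁ n₂ α β = 0 :=
  Ntwo_zero_of_le hn₁ hn₂ hn h

include hn₁ hn₂ in
lemma Ntwo_zero₁' {α : ℤ} (h : α < 0) (β : ℤ) : Ntwo n₁ n₂ α β = 0 :=
  Ntwo_zero₁ hn₁ hn₂ h β

include hn₁ hn₂ in
lemma Ntwo_zero₂' {β : ℤ} (h : β < 0) (α : ℤ) : Ntwo n₁ n₂ α β = 0 :=
  Ntwo_zero₂ hn₁ hn₂ h α

include hm₁ hm₂ hn₁ hn₂ hm hn in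
lemma claimA (c D e R : ℤ) (hc : 0 ≤ c) (hD : 0 ≤ D) (he : 0 ≤ e)
    (hR : 2 * (c + D + e) + 2 ≤ R) :
    ∑ u ∈ Finset.Icc (-R) R, ∑ v ∈ Finset.Icc (-R) R,
      Mk m₁ m₂ u v * Ntwo n₁ n₂ (c + D + e - u) (c - v)
    ≤ ∑ u ∈ Finset.Icc (-R) R, ∑ v ∈ Finset.Icc (-R) R,
      Mk m₁ m₂ u v * Ntwo n₁ n₂ (c + e - u) (c + D - v) := by
  have hsupp : ∀ u v : ℤ, Mk m₁ m₂ u v * Ntwo n₁ n₂ (c + D + e - u) (c - v) ≠ 0 →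
      0 ≤ u ∧ u ≤ c + D + e ∧ 0 ≤ v ∧ v ≤ c := by
    intro u v h
    refine ⟨?_, ?_, ?_, ?_⟩ <;> by_contra hx <;> push_neg at hx <;> apply h
    · rw [Mk_zero₁ hx, zero_mul]
    · rw [Ntwo_zero₁' hn₁ hn₂ (by omega), mul_zero]
    · rw [Mk_zero₂ hx, zero_mul]
    · rw [Ntwo_zero₂' hn₁ hn₂ (by omega), mul_zero]
  have step1 :
      ∑ u ∈ Finset.Icc (-R) R, ∑ v ∈ Finset.Icc (-R) R,
        Mk m₁ m₂ u v * Ntwo n₁ n₂ (c + D + e - u) (c - v)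
      = ∑ u ∈ Finset.Icc (-R) R, ∑ v ∈ Finset.Icc (-R) R,
        Mk m₁ m₂ (u + D) (v - D) * Ntwo n₁ n₂ (c + e - u) (c + D - v) := by
    have e1 :
        ∑ u ∈ Finset.Icc (-R) R, ∑ v ∈ Finset.Icc (-R) R,
          Mk m₁ m₂ (u + D) (v - D) * Ntwo n₁ n₂ (c + e - u) (c + D - v)
        = ∑ u ∈ Finset.Icc (-R) R, ∑ v ∈ Finset.Icc (-R) R,
          Mk m₁ m₂ (u + D) (v - D) * Ntwo n₁ n₂ (c + D + e - (u + D)) (c - (v - D)) := by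
      refine Finset.sum_congr rfl fun u _ => Finset.sum_congr rfl fun v _ => ?_
      rw [show c + D + e - (u + D) = c + e - u from by ring,
          show c - (v - D) = c + D - v from by ring]
    have e2 :
        ∑ u ∈ Finset.Icc (-R) R, ∑ v ∈ Finset.Icc (-R) R,
          Mk m₁ m₂ (u + D) (v - D) * Ntwo n₁ n₂ (c + D + e - (u + D)) (c - (v - D))
        = ∑ u ∈ Finset.Icc (-R + D) (R + D), ∑ v ∈ Finset.Icc (-R - D) (R - D),
          Mk m₁ m₂ u v * Ntwo n₁ n₂ (c + D + e - u) (c - v) := by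
      have inner : ∀ u : ℤ,
          ∑ v ∈ Finset.Icc (-R) R,
            Mk m₁ m₂ u (v - D) * Ntwo n₁ n₂ (c + D + e - u) (c - (v - D))
          = ∑ v ∈ Finset.Icc (-R - D) (R - D),
            Mk m₁ m₂ u v * Ntwo n₁ n₂ (c + D + e - u) (c - v) := by
        intro u
        have := sum_shift (fun v => Mk m₁ m₂ u v * Ntwo n₁ n₂ (c + D + e - u) (c - v))
          (-R) R (-D)
        simp only [← sub_eq_add_neg] at this
        exact this
      calc
        ∑ u ∈ Finset.Icc (-R) R, ∑ v ∈ Finset.Icc (-R) R,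
            Mk m₁ m₂ (u + D) (v - D) * Ntwo n₁ n₂ (c + D + e - (u + D)) (c - (v - D))
          = ∑ u ∈ Finset.Icc (-R) R, ∑ v ∈ Finset.Icc (-R - D) (R - D),
            Mk m₁ m₂ (u + D) v * Ntwo n₁ n₂ (c + D + e - (u + D)) (c - v) := by
            exact Finset.sum_congr rfl fun u _ => inner (u + D)
        _ = ∑ u ∈ Finset.Icc (-R + D) (R + D), ∑ v ∈ Finset.Icc (-R - D) (R - D),
            Mk m₁ m₂ u v * Ntwo n₁ n₂ (c + D + e - u) (c - v) := by
            exact sum_shift (fun u => ∑ v ∈ Finset.Icc (-R - D) (R - D),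
              Mk m₁ m₂ u v * Ntwo n₁ n₂ (c + D + e - u) (c - v)) (-R) R D
    have e3 :
        ∑ u ∈ Finset.Icc (-R + D) (R + D), ∑ v ∈ Finset.Icc (-R - D) (R - D),
          Mk m₁ m₂ u v * Ntwo n₁ n₂ (c + D + e - u) (c - v)
        = ∑ u ∈ Finset.Icc (-R) R, ∑ v ∈ Finset.Icc (-R) R,
          Mk m₁ m₂ u v * Ntwo n₁ n₂ (c + D + e - u) (c - v) := by
      rw [double_core _ 0 (c + D + e) 0 c hsupp (-R + D) (R + D) (-R - D) (R - D)
        (by omega) (by omega) (by omega) (by omega),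
        double_core _ 0 (c + D + e) 0 c hsupp (-R) R (-R) R
        (by omega) (by omega) (by omega) (by omega)]
    rw [e1, e2, e3]
  rw [step1]
  refine Finset.sum_le_sum fun u _ => Finset.sum_le_sum fun v _ => ?_
  by_cases hcase : c + D - v ≤ c + e - u
  · rw [Ntwo_zero_le hn₁ hn₂ hn hcase, mul_zero, mul_zero]
  · push_neg at hcase
    have hM : Mk m₁ m₂ (u + D) (v - D) ≤ Mk m₁ m₂ u v := by
      have := Mshift hm₁ hm₂ hm (x := u) (y := v) (t := D) hD (by omega)
      exact this
    exact mul_le_mul_of_nonneg_right hM (Ntwo_nonneg' _ _)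

end Main
section MainB
open Finset

variable {m₁ m₂ n₁ n₂ : ℕ → ℝ}
variable (hm₁ : ∀ x, 0 ≤ m₁ x) (hm₂ : ∀ x, 0 ≤ m₂ x) (hn₁ : ∀ x, 0 ≤ n₁ x) (hn₂ : ∀ x, 0 ≤ n₂ x)
variable (hm : LRup m₁ m₂) (hn : LRup n₁ n₂)

lemma psi_reindex (g : ℤ → ℤ → ℝ) (e R A₁ B₁ A₂ B₂ : ℤ)
    (hsupp : ∀ u v : ℤ, g u v ≠ 0 → A₁ ≤ u ∧ u ≤ B₁ ∧ A₂ ≤ v ∧ v ≤ B₂)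
    (h1 : -R ≤ A₁) (h2 : B₁ ≤ R) (h3 : -R ≤ A₂) (h4 : B₂ ≤ R)
    (h5 : -R + e ≤ A₁) (h6 : B₁ ≤ R + e) (h7 : -R - e ≤ A₂) (h8 : B₂ ≤ R - e) :
    ∑ u ∈ Finset.Icc (-R) R, ∑ v ∈ Finset.Icc (-R) R, g (v + e) (u - e)
    = ∑ u ∈ Finset.Icc (-R) R, ∑ v ∈ Finset.Icc (-R) R, g u v := by
  have inner : ∀ u : ℤ,
      ∑ v ∈ Finset.Icc (-R) R, g (v + e) (u - e)
      = ∑ v ∈ Finset.Icc (-R + e) (R + e), g v (u - e) := by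
    intro u
    exact sum_shift (fun v => g v (u - e)) (-R) R e
  calc
    ∑ u ∈ Finset.Icc (-R) R, ∑ v ∈ Finset.Icc (-R) R, g (v + e) (u - e)
      = ∑ u ∈ Finset.Icc (-R) R, ∑ v ∈ Finset.Icc (-R + e) (R + e), g v (u - e) := by
        exact Finset.sum_congr rfl fun u _ => inner u
    _ = ∑ v ∈ Finset.Icc (-R + e) (R + e), ∑ u ∈ Finset.Icc (-R) R, g v (u - e) :=
        Finset.sum_comm
    _ = ∑ v ∈ Finset.Icc (-R + e) (R + e), ∑ u ∈ Finset.Icc (-R - e) (R - e), g v u := by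
        refine Finset.sum_congr rfl fun v _ => ?_
        have := sum_shift (fun u => g v u) (-R) R (-e)
        simp only [← sub_eq_add_neg] at this
        exact this
    _ = ∑ u ∈ Finset.Icc A₁ B₁, ∑ v ∈ Finset.Icc A₂ B₂, g u v :=
        double_core g A₁ B₁ A₂ B₂ hsupp _ _ _ _ h5 h6 h7 h8
    _ = ∑ u ∈ Finset.Icc (-R) R, ∑ v ∈ Finset.Icc (-R) R, g u v :=
        (double_core g A₁ B₁ A₂ B₂ hsupp _ _ _ _ h1 h2 h3 h4).symm

include hm₁ hm₂ hn₁ hn₂ hm hn in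
lemma claimB (c D e R : ℤ) (hc : 0 ≤ c) (hD : 0 ≤ D) (he : 0 ≤ e)
    (hR : 2 * (c + D + e) + 2 ≤ R) :
    ∑ u ∈ Finset.Icc (-R) R, ∑ v ∈ Finset.Icc (-R) R,
      Mk m₁ m₂ u v * Nmin n₁ n₂ (c + D + e - u) (c - v)
    ≤ ∑ u ∈ Finset.Icc (-R) R, ∑ v ∈ Finset.Icc (-R) R,
      Mk m₁ m₂ u v * Nmin n₁ n₂ (c + e - u) (c + D - v) := by
  -- Y = Sa
  have idY :
      ∑ u ∈ Finset.Icc (-R) R, ∑ v ∈ Finset.Icc (-R) R,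
        Mk m₁ m₂ u v * Nmin n₁ n₂ (c + e - u) (c + D - v)
      = ∑ u ∈ Finset.Icc (-R) R, ∑ v ∈ Finset.Icc (-R) R,
        Mk m₁ m₂ (v + e) (u - e) * Nmin n₁ n₂ (c + D + e - u) (c - v) := by
    have congr1 :
        ∑ u ∈ Finset.Icc (-R) R, ∑ v ∈ Finset.Icc (-R) R,
          Mk m₁ m₂ u v * Nmin n₁ n₂ (c + e - u) (c + D - v)
        = ∑ u ∈ Finset.Icc (-R) R, ∑ v ∈ Finset.Icc (-R) R,
          Mk m₁ m₂ ((u - e) + e) ((v + e) - e) * Nmin n₁ n₂ (c + D + e - (v + e)) (c - (u - e)) := by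
      refine Finset.sum_congr rfl fun u _ => Finset.sum_congr rfl fun v _ => ?_
      rw [show (u - e) + e = u from by ring, show (v + e) - e = v from by ring,
          show c + D + e - (v + e) = c + D - v from by ring,
          show c - (u - e) = c + e - u from by ring, Nmin_symm]
    rw [congr1]
    have hsuppY : ∀ u v : ℤ,
        Mk m₁ m₂ (v + e) (u - e) * Nmin n₁ n₂ (c + D + e - u) (c - v) ≠ 0 →
        e ≤ u ∧ u ≤ c + D + e ∧ -e ≤ v ∧ v ≤ c := by
      intro u v h
      refine ⟨?_, ?_, ?_, ?_⟩ <;> by_contra hx <;> push_neg at hx <;> apply h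
      · rw [Mk_zero₂ (by omega), zero_mul]
      · rw [Nmin_zero₁ hn₁ hn₂ (by omega), mul_zero]
      · rw [Mk_zero₁ (by omega), zero_mul]
      · rw [Nmin_zero₂ hn₁ hn₂ (by omega), mul_zero]
    exact psi_reindex (fun u v => Mk m₁ m₂ (v + e) (u - e) * Nmin n₁ n₂ (c + D + e - u) (c - v))
      e R e (c + D + e) (-e) c hsuppY
      (by omega) (by omega) (by omega) (by omega) (by omega) (by omega) (by omega) (by omega)
  -- X = Ss
  have idX :
      ∑ u ∈ Finset.Icc (-R) R, ∑ v ∈ Finset.Icc (-R) R,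
        Mk m₁ m₂ u v * Nmin n₁ n₂ (c + D + e - u) (c - v)
      = ∑ u ∈ Finset.Icc (-R) R, ∑ v ∈ Finset.Icc (-R) R,
        Mk m₁ m₂ (v + e) (u - e) * Nmin n₁ n₂ (c + e - u) (c + D - v) := by
    have congr1 :
        ∑ u ∈ Finset.Icc (-R) R, ∑ v ∈ Finset.Icc (-R) R,
          Mk m₁ m₂ u v * Nmin n₁ n₂ (c + D + e - u) (c - v)
        = ∑ u ∈ Finset.Icc (-R) R, ∑ v ∈ Finset.Icc (-R) R,
          Mk m₁ m₂ ((u - e) + e) ((v + e) - e) * Nmin n₁ n₂ (c + e - (v + e)) (c + D - (u - e)) := by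
      refine Finset.sum_congr rfl fun u _ => Finset.sum_congr rfl fun v _ => ?_
      rw [show (u - e) + e = u from by ring, show (v + e) - e = v from by ring,
          show c + e - (v + e) = c - v from by ring,
          show c + D - (u - e) = c + D + e - u from by ring, Nmin_symm]
    rw [congr1]
    have hsuppX : ∀ u v : ℤ,
        Mk m₁ m₂ (v + e) (u - e) * Nmin n₁ n₂ (c + e - u) (c + D - v) ≠ 0 →
        e ≤ u ∧ u ≤ c + e ∧ -e ≤ v ∧ v ≤ c + D := by
      intro u v h
      refine ⟨?_, ?_, ?_, ?_⟩ <;> by_contra hx <;> push_neg at hx <;> apply h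
      · rw [Mk_zero₂ (by omega), zero_mul]
      · rw [Nmin_zero₁ hn₁ hn₂ (by omega), mul_zero]
      · rw [Mk_zero₁ (by omega), zero_mul]
      · rw [Nmin_zero₂ hn₁ hn₂ (by omega), mul_zero]
    exact psi_reindex (fun u v => Mk m₁ m₂ (v + e) (u - e) * Nmin n₁ n₂ (c + e - u) (c + D - v))
      e R e (c + e) (-e) (c + D) hsuppX
      (by omega) (by omega) (by omega) (by omega) (by omega) (by omega) (by omega) (by omega)
  -- expansion of the T-sum
  have expand :
      ∑ u ∈ Finset.Icc (-R) R, ∑ v ∈ Finset.Icc (-R) R,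
        ((Mk m₁ m₂ u v - Mk m₁ m₂ (v + e) (u - e)) *
          (Nmin n₁ n₂ (c + e - u) (c + D - v) - Nmin n₁ n₂ (c + D + e - u) (c - v)))
      = (∑ u ∈ Finset.Icc (-R) R, ∑ v ∈ Finset.Icc (-R) R,
          Mk m₁ m₂ u v * Nmin n₁ n₂ (c + e - u) (c + D - v)
        - ∑ u ∈ Finset.Icc (-R) R, ∑ v ∈ Finset.Icc (-R) R,
          Mk m₁ m₂ u v * Nmin n₁ n₂ (c + D + e - u) (c - v))
        - (∑ u ∈ Finset.Icc (-R) R, ∑ v ∈ Finset.Icc (-R) R,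
          Mk m₁ m₂ (v + e) (u - e) * Nmin n₁ n₂ (c + e - u) (c + D - v)
        - ∑ u ∈ Finset.Icc (-R) R, ∑ v ∈ Finset.Icc (-R) R,
          Mk m₁ m₂ (v + e) (u - e) * Nmin n₁ n₂ (c + D + e - u) (c - v)) := by
    have congr1 :
        ∑ u ∈ Finset.Icc (-R) R, ∑ v ∈ Finset.Icc (-R) R,
          ((Mk m₁ m₂ u v - Mk m₁ m₂ (v + e) (u - e)) *
            (Nmin n₁ n₂ (c + e - u) (c + D - v) - Nmin n₁ n₂ (c + D + e - u) (c - v)))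
        = ∑ u ∈ Finset.Icc (-R) R, ∑ v ∈ Finset.Icc (-R) R,
          ((Mk m₁ m₂ u v * Nmin n₁ n₂ (c + e - u) (c + D - v)
            - Mk m₁ m₂ u v * Nmin n₁ n₂ (c + D + e - u) (c - v))
          - (Mk m₁ m₂ (v + e) (u - e) * Nmin n₁ n₂ (c + e - u) (c + D - v)
            - Mk m₁ m₂ (v + e) (u - e) * Nmin n₁ n₂ (c + D + e - u) (c - v))) := by
      exact Finset.sum_congr rfl fun u _ => Finset.sum_congr rfl fun v _ => by ring
    rw [congr1]
    simp only [Finset.sum_sub_distrib]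
  -- termwise nonnegativity of the T-sum
  have Tnn : (0:ℝ) ≤
      ∑ u ∈ Finset.Icc (-R) R, ∑ v ∈ Finset.Icc (-R) R,
        ((Mk m₁ m₂ u v - Mk m₁ m₂ (v + e) (u - e)) *
          (Nmin n₁ n₂ (c + e - u) (c + D - v) - Nmin n₁ n₂ (c + D + e - u) (c - v))) := by
    refine Finset.sum_nonneg fun u _ => Finset.sum_nonneg fun v _ => ?_
    rcases le_or_gt (v + e) u with hcase | hcase
    · -- both factors ≤ 0
      have f1 : Mk m₁ m₂ u v ≤ Mk m₁ m₂ (v + e) (u - e) := by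
        have h := Mshift hm₁ hm₂ hm (x := v + e) (y := u - e) (t := u - (v + e))
          (by omega) (by omega)
        rw [show v + e + (u - (v + e)) = u from by ring,
            show u - e - (u - (v + e)) = v from by ring] at h
        exact h
      have f2 : Nmin n₁ n₂ (c + e - u) (c + D - v) ≤ Nmin n₁ n₂ (c + D + e - u) (c - v) := by
        have h := Nmin_mono hn₁ hn₂ hn (x := c + D + e - u) (y := c - v) (t := u - v - e)
          (by omega) (by omega)
        rw [show c + D + e - u + (u - v - e) = c + D - v from by ring,
            show c - v - (u - v - e) = c + e - u from by ring, Nmin_symm] at h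
        exact h
      have : (0:ℝ) ≤ (Mk m₁ m₂ (v + e) (u - e) - Mk m₁ m₂ u v) *
          (Nmin n₁ n₂ (c + D + e - u) (c - v) - Nmin n₁ n₂ (c + e - u) (c + D - v)) :=
        mul_nonneg (by linarith) (by linarith)
      nlinarith [this]
    · -- both factors ≥ 0
      have f1 : Mk m₁ m₂ (v + e) (u - e) ≤ Mk m₁ m₂ u v := by
        have h := Mshift hm₁ hm₂ hm (x := u) (y := v) (t := (v + e) - u)
          (by omega) (by omega)
        rw [show u + (v + e - u) = v + e from by ring,
            show v - (v + e - u) = u - e from by ring] at h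
        exact h
      have f2 : Nmin n₁ n₂ (c + D + e - u) (c - v) ≤ Nmin n₁ n₂ (c + e - u) (c + D - v) := by
        have h := Nmin_mono hn₁ hn₂ hn (x := c + e - u) (y := c + D - v) (t := D)
          hD (by omega)
        rw [show c + e - u + D = c + D + e - u from by ring,
            show c + D - v - D = c - v from by ring] at h
        exact h
      exact mul_nonneg (by linarith) (by linarith)
  linarith [Tnn, expand.symm.trans_le (le_of_eq rfl)]

end MainB
section Final
open Finset

variable {m₁ m₂ n₁ n₂ : ℕ → ℝ}
variable (hm₁ : ∀ x, 0 ≤ m₁ x) (hm₂ : ∀ x, 0 ≤ m₂ x) (hn₁ : ∀ x, 0 ≤ n₁ x) (hn₂ : ∀ x, 0 ≤ n₂ x)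
variable (hm : LRup m₁ m₂) (hn : LRup n₁ n₂)

include hm₁ hm₂ hn₁ hn₂ hm hn in
lemma main_ineq (c D e R : ℤ) (hc : 0 ≤ c) (hD : 0 ≤ D) (he : 0 ≤ e)
    (hR : 2 * (c + D + e) + 2 ≤ R) :
    ∑ u ∈ Finset.Icc (-R) R, ∑ v ∈ Finset.Icc (-R) R,
      Mk m₁ m₂ u v * Mk n₁ n₂ (c + D + e - u) (c - v)
    ≤ ∑ u ∈ Finset.Icc (-R) R, ∑ v ∈ Finset.Icc (-R) R,
      Mk m₁ m₂ u v * Mk n₁ n₂ (c + e - u) (c + D - v) := by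
  have split : ∀ x y : ℤ,
      (∑ u ∈ Finset.Icc (-R) R, ∑ v ∈ Finset.Icc (-R) R,
        Mk m₁ m₂ u v * Mk n₁ n₂ (x - u) (y - v))
      = (∑ u ∈ Finset.Icc (-R) R, ∑ v ∈ Finset.Icc (-R) R,
          Mk m₁ m₂ u v * Nmin n₁ n₂ (x - u) (y - v))
        + (∑ u ∈ Finset.Icc (-R) R, ∑ v ∈ Finset.Icc (-R) R,
          Mk m₁ m₂ u v * Ntwo n₁ n₂ (x - u) (y - v)) := by
    intro x y
    have congr1 :
        (∑ u ∈ Finset.Icc (-R) R, ∑ v ∈ Finset.Icc (-R) R,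
          Mk m₁ m₂ u v * Mk n₁ n₂ (x - u) (y - v))
        = ∑ u ∈ Finset.Icc (-R) R, ∑ v ∈ Finset.Icc (-R) R,
          (Mk m₁ m₂ u v * Nmin n₁ n₂ (x - u) (y - v)
            + Mk m₁ m₂ u v * Ntwo n₁ n₂ (x - u) (y - v)) := by
      refine Finset.sum_congr rfl fun u _ => Finset.sum_congr rfl fun v _ => ?_
      rw [Ntwo]; ring
    rw [congr1]
    simp only [Finset.sum_add_distrib]
  have h1 := split (c + D + e) c
  have h2 := split (c + e) (c + D)
  calc
    ∑ u ∈ Finset.Icc (-R) R, ∑ v ∈ Finset.Icc (-R) R,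
        Mk m₁ m₂ u v * Mk n₁ n₂ (c + D + e - u) (c - v)
      = (∑ u ∈ Finset.Icc (-R) R, ∑ v ∈ Finset.Icc (-R) R,
          Mk m₁ m₂ u v * Nmin n₁ n₂ (c + D + e - u) (c - v))
        + (∑ u ∈ Finset.Icc (-R) R, ∑ v ∈ Finset.Icc (-R) R,
          Mk m₁ m₂ u v * Ntwo n₁ n₂ (c + D + e - u) (c - v)) := h1
    _ ≤ (∑ u ∈ Finset.Icc (-R) R, ∑ v ∈ Finset.Icc (-R) R,
          Mk m₁ m₂ u v * Nmin n₁ n₂ (c + e - u) (c + D - v))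
        + (∑ u ∈ Finset.Icc (-R) R, ∑ v ∈ Finset.Icc (-R) R,
          Mk m₁ m₂ u v * Ntwo n₁ n₂ (c + e - u) (c + D - v)) :=
        add_le_add (claimB hm₁ hm₂ hn₁ hn₂ hm hn c D e R hc hD he hR)
          (claimA hm₁ hm₂ hn₁ hn₂ hm hn c D e R hc hD he hR)
    _ = ∑ u ∈ Finset.Icc (-R) R, ∑ v ∈ Finset.Icc (-R) R,
          Mk m₁ m₂ u v * Mk n₁ n₂ (c + e - u) (c + D - v) := h2.symm

end Final

theorem lru_conv (m₁ m₂ n₁ n₂ : ℕ → ℝ)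
    (hm₁ : IsDist m₁) (hm₂ : IsDist m₂) (hn₁ : IsDist n₁) (hn₂ : IsDist n₂)
    (hm : LRup m₁ m₂) (hn : LRup n₁ n₂) :
    LRup (conv m₁ n₁) (conv m₂ n₂) := by
  intro i k l
  set R : ℤ := 2 * ((i : ℤ) + k + l) + 2 with hRdef
  rw [conv_mul m₁ n₁ m₂ n₂ (i + k + l) i R (by omega) (by omega),
      conv_mul m₁ n₁ m₂ n₂ (i + l) (i + k) R (by omega) (by omega)]
  have key := main_ineq hm₁.1 hm₂.1 hn₁.1 hn₂.1 hm hn (i : ℤ) (k : ℤ) (l : ℤ) R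
    (by positivity) (by positivity) (by positivity) (by omega)
  push_cast
  convert key using 2
  all_goals rfl
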